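/- Let G = (V, E) be a finite, strongly connected directed network with arc capacities c : E → ℝ and imports b : V → ℝ. Suppose that ∑_{v ∈ V} b(v) = 0 and that c(e) ≥ ∑_{v ∈ V} max(b(v), 0) for every arc e ∈ E. Then there exists a feasible flow on G, i.e., a function f : E → ℝ with 0 ≤ f(e) ≤ c(e) for every arc e and with b(v) + ∑_{(u,v) ∈ E} f(u,v) − ∑_{(v,w) ∈ E} f(v,w) = 0 for every vertex v. -/

import Mathlib

open Finset

/-- From reflexive-transitive reachability extract a vertex-simple chain. -/
private lemma flow_exists_nodup_chain {V : Type*} {R : V → V → Prop} {t : V} :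
    ∀ {s : V}, Relation.ReflTransGen R s t →
    ∃ l : List V, List.Chain R s l ∧ (s :: l).getLast? = some t ∧ (s :: l).Nodup := by
  intro s h
  induction h using Relation.ReflTransGen.head_induction_on with
  | refl => exact ⟨[], List.Chain.nil, by simp, List.nodup_singleton t⟩
  | @head s u hsu h ih =>
    obtain ⟨m, hchain, hlast, hnodup⟩ := ih
    by_cases hs : s ∈ u :: m
    · obtain ⟨l₁, l₂, hsplit⟩ := List.append_of_mem hs
      have hsuf : (s :: l₂) <:+ (u :: m) := ⟨l₁, hsplit.symm⟩
      refine ⟨l₂, ?_, ?_, ?_⟩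
      · have h1 : List.Chain' R (u :: m) := hchain
        have h2 : List.Chain' R (s :: l₂) := h1.suffix hsuf
        exact h2
      · rw [← hlast, hsplit, List.getLast?_append_of_ne_nil _ (by simp)]
      · exact hnodup.sublist hsuf.sublist
    · refine ⟨u :: m, List.Chain.cons hsu hchain, ?_, List.nodup_cons.2 ⟨hs, hnodup⟩⟩
      rw [List.getLast?_cons_cons]
      exact hlast

/-- A unit flow along a vertex-simple path. -/
private lemma flow_path {V : Type*} [Fintype V] [DecidableEq V] (E : Set (V × V)) :
    ∀ (l : List V) (s t : V), List.Chain (fun a b => (a, b) ∈ E) s l → (s :: l).Nodup →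
    (s :: l).getLast? = some t →
    ∃ g : V × V → ℝ,
      (∀ e, 0 ≤ g e ∧ g e ≤ 1) ∧
      (∀ e, g e ≠ 0 → e ∈ E) ∧
      (∀ e, g e ≠ 0 → e.1 ∈ s :: l) ∧
      (∀ v : V, (∑ u, g (u, v)) - (∑ w, g (v, w)) =
        (if v = t then (1:ℝ) else 0) - (if v = s then 1 else 0)) := by
  classical
  intro l
  induction l with
  | nil =>
    intro s t _ _ hlast
    have hts : t = s := by simpa using hlast.symm
    subst hts
    exact ⟨0, by simp, by simp, by simp, fun v => by simp⟩
  | cons u m ih =>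
    intro s t hchain hnodup hlast
    replace hchain := List.isChain_cons_cons.1 hchain
    obtain ⟨hsu, hchain'⟩ := hchain
    rw [List.nodup_cons] at hnodup
    obtain ⟨hsmem, hnodup'⟩ := hnodup
    rw [List.getLast?_cons_cons] at hlast
    obtain ⟨g', hg'b, hg'E, hg'fst, hg'bal⟩ := ih u t hchain' hnodup' hlast
    have hg'su : g' (s, u) = 0 := by
      by_contra h
      exact hsmem (hg'fst (s, u) h)
    refine ⟨fun e => g' e + (if e = (s, u) then 1 else 0), ?_, ?_, ?_, ?_⟩
    · intro e
      by_cases he : e = (s, u)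
      · subst he; simp [hg'su]
      · simp only [if_neg he, add_zero]
        exact hg'b e
    · intro e he
      by_cases h : e = (s, u)
      · subst h; exact hsu
      · refine hg'E e ?_
        simpa [h] using he
    · intro e he
      by_cases h : e = (s, u)
      · subst h; exact List.mem_cons_self
      · exact List.mem_cons_of_mem _ (hg'fst e (by simpa [h] using he))
    · intro v
      have hin : (∑ x, (if (x, v) = (s, u) then (1:ℝ) else 0)) = if v = u then 1 else 0 := by
        rcases eq_or_ne v u with rfl | hvu
        · simp [Prod.ext_iff]
        · simp [Prod.ext_iff, hvu]
      have hout : (∑ w, (if (v, w) = (s, u) then (1:ℝ) else 0)) = if v = s then 1 else 0 := by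
        rcases eq_or_ne v s with rfl | hvs
        · simp [Prod.ext_iff]
        · simp [Prod.ext_iff, hvs]
      rw [Finset.sum_add_distrib, Finset.sum_add_distrib, hin, hout]
      have H := hg'bal v
      linarith [H]

open Classical in
/-- In a finite, strongly connected directed network with imports summing to zero
and every arc capacity at least the total supply, a feasible flow exists. -/
theorem stmt_0 {V : Type*} [Fintype V]
    (E : Set (V × V)) (c : V × V → ℝ) (b : V → ℝ)
    (hconn : ∀ u v : V, Relation.ReflTransGen (fun a b => (a, b) ∈ E) u v)
    (hcap : ∀ e ∈ E, 0 ≤ c e)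
    (hbsum : ∑ v, b v = 0)
    (hc : ∀ e ∈ E, ∑ v, max (b v) 0 ≤ c e) :
    ∃ f : V × V → ℝ,
      (∀ e ∈ E, 0 ≤ f e ∧ f e ≤ c e) ∧
      ∀ v : V, b v + (∑ u, if (u, v) ∈ E then f (u, v) else 0)
        - (∑ w, if (v, w) ∈ E then f (v, w) else 0) = 0 := by
  classical
  have hpath : ∀ s t : V, ∃ g : V × V → ℝ,
      (∀ e, 0 ≤ g e ∧ g e ≤ 1) ∧ (∀ e, g e ≠ 0 → e ∈ E) ∧
      (∀ v : V, (∑ u, g (u, v)) - (∑ w, g (v, w)) =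
        (if v = t then (1:ℝ) else 0) - (if v = s then 1 else 0)) := by
    intro s t
    obtain ⟨l, hchain, hlast, hnodup⟩ := flow_exists_nodup_chain (hconn s t)
    obtain ⟨g, hb, hE, _, hbal⟩ := flow_path E l s t hchain hnodup hlast
    exact ⟨g, hb, hE, hbal⟩
  choose g hgb hgE hgbal using hpath
  set S : ℝ := ∑ v, max (b v) 0 with hS
  have hbplus : ∀ v, max (b v) 0 - max (-(b v)) 0 = b v := by
    intro v
    rcases le_total (b v) 0 with h | h
    · rw [max_eq_right h, max_eq_left (neg_nonneg.2 h)]; ring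
    · rw [max_eq_left h, max_eq_right (neg_nonpos.2 h)]; ring
  have hSneg : ∑ v, max (-(b v)) 0 = S := by
    have h0 : ∑ v, (max (b v) 0 - max (-(b v)) 0) = 0 := by
      rw [Finset.sum_congr rfl (fun v _ => hbplus v)]; exact hbsum
    rw [Finset.sum_sub_distrib] at h0
    rw [← hS] at h0
    linarith
  have hSnonneg : 0 ≤ S := Finset.sum_nonneg (fun v _ => le_max_right _ _)
  rcases eq_or_lt_of_le hSnonneg with hS0 | hSpos
  · -- S = 0 : all b are zero, take f = 0
    have hble : ∀ v, b v ≤ 0 := by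
      intro v
      have h1 := (Finset.sum_eq_zero_iff_of_nonneg
        (fun v _ => le_max_right (b v) 0)).1 hS0.symm v (Finset.mem_univ v)
      nlinarith [le_max_left (b v) (0:ℝ)]
    have hb0 : ∀ v, b v = 0 := fun v =>
      (Finset.sum_eq_zero_iff_of_nonpos (fun v _ => hble v)).1 hbsum v (Finset.mem_univ v)
    exact ⟨0, fun e he => ⟨le_refl _, hcap e he⟩, fun v => by simp [hb0 v]⟩
  · -- S > 0
    have hSne : S ≠ 0 := ne_of_gt hSpos
    set a : V → V → ℝ := fun s t => max (b s) 0 * max (-(b t)) 0 / S with ha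
    have hanonneg : ∀ s t, 0 ≤ a s t := fun s t =>
      div_nonneg (mul_nonneg (le_max_right _ _) (le_max_right _ _)) hSnonneg
    have hasum_t : ∀ s, ∑ t, a s t = max (b s) 0 := by
      intro s
      simp only [ha]
      rw [← Finset.sum_div, ← Finset.mul_sum, hSneg, mul_div_assoc, div_self hSne, mul_one]
    have hasum_s : ∀ t, ∑ s, a s t = max (-(b t)) 0 := by
      intro t
      simp only [ha]
      rw [← Finset.sum_div, ← Finset.sum_mul, ← hS, mul_comm, mul_div_assoc, div_self hSne,
        mul_one]
    refine ⟨fun e => ∑ s, ∑ t, a s t * g s t e, ?_, ?_⟩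
    · intro e he
      constructor
      · exact Finset.sum_nonneg fun s _ => Finset.sum_nonneg fun t _ =>
          mul_nonneg (hanonneg s t) (hgb s t e).1
      · have h1 : ∑ s, ∑ t, a s t * g s t e ≤ ∑ s, ∑ t, a s t := by
          refine Finset.sum_le_sum fun s _ => Finset.sum_le_sum fun t _ => ?_
          nlinarith [(hgb s t e).1, (hgb s t e).2, hanonneg s t]
        have h2 : ∑ s, ∑ t, a s t = S := by
          rw [Finset.sum_congr rfl (fun s _ => hasum_t s), ← hS]
        calc ∑ s, ∑ t, a s t * g s t e ≤ S := by rw [← h2]; exact h1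
          _ ≤ c e := hc e he
    · intro v
      have hsupp : ∀ (e : V × V), e ∉ E → ∑ s, ∑ t, a s t * g s t e = 0 := by
        intro e he
        refine Finset.sum_eq_zero fun s _ => Finset.sum_eq_zero fun t _ => ?_
        rcases eq_or_ne (g s t e) 0 with h | h
        · rw [h, mul_zero]
        · exact absurd (hgE s t e h) he
      have hif : ∀ (e : V × V),
          (if e ∈ E then ∑ s, ∑ t, a s t * g s t e else 0) = ∑ s, ∑ t, a s t * g s t e := by
        intro e
        by_cases he : e ∈ E
        · rw [if_pos he]
        · rw [if_neg he, hsupp e he]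
      simp only [hif]
      have c1 : (∑ u, ∑ s, ∑ t, a s t * g s t (u, v))
          = ∑ s, ∑ t, ∑ u, a s t * g s t (u, v) := by
        rw [Finset.sum_comm]
        exact Finset.sum_congr rfl fun s _ => Finset.sum_comm
      have c2 : (∑ w, ∑ s, ∑ t, a s t * g s t (v, w))
          = ∑ s, ∑ t, ∑ w, a s t * g s t (v, w) := by
        rw [Finset.sum_comm]
        exact Finset.sum_congr rfl fun s _ => Finset.sum_comm
      have key : (∑ u, ∑ s, ∑ t, a s t * g s t (u, v))
          - (∑ w, ∑ s, ∑ t, a s t * g s t (v, w))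
          = ∑ s, ∑ t, a s t * ((if v = t then (1:ℝ) else 0) - (if v = s then 1 else 0)) := by
        rw [c1, c2, ← Finset.sum_sub_distrib]
        refine Finset.sum_congr rfl fun s _ => ?_
        rw [← Finset.sum_sub_distrib]
        refine Finset.sum_congr rfl fun t _ => ?_
        rw [← Finset.mul_sum, ← Finset.mul_sum, ← mul_sub, hgbal s t v]
      have hexp : ∑ s, ∑ t, a s t * ((if v = t then (1:ℝ) else 0) - (if v = s then 1 else 0))
          = -(b v) := by
        have e1 : ∀ s, ∑ t, a s t * (if v = t then (1:ℝ) else 0) = a s v := by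
          intro s
          simp [mul_ite, mul_one, mul_zero, Finset.sum_ite_eq]
        have e2 : ∀ s, ∑ t, a s t * (if v = s then (1:ℝ) else 0)
            = (if v = s then (1:ℝ) else 0) * max (b s) 0 := by
          intro s
          rw [← hasum_t s, Finset.mul_sum]
          exact Finset.sum_congr rfl fun t _ => by ring
        have e3 : ∑ s, a s v = max (-(b v)) 0 := hasum_s v
        have e4 : ∑ s, (if v = s then (1:ℝ) else 0) * max (b s) 0 = max (b v) 0 := by
          simp [ite_mul, one_mul, zero_mul, Finset.sum_ite_eq]
        simp only [mul_sub]
        rw [Finset.sum_congr rfl (fun s _ => by rw [Finset.sum_sub_distrib, e1 s, e2 s])]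
        rw [Finset.sum_sub_distrib, e3, e4]
        linarith [hbplus v]
      have hfinal := key.trans hexp
      linarith [hfinal]
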